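/- Let q ≥ 2 and j ≥ 2. Define recursively b_{j,m,1} = [1^m 0^j]_q and b_{j,m,n+1} = b_{j,m,n} - (q^{l} - 1) where l is the largest positive integer with q^l - 1 ≤ b_{j,m,n}. Then for all 1 ≤ n ≤ q^{j-1} and m ≥ n, we have l = j + m - n at step n, i.e. b_{j,m,n+1} = b_{j,m,n} - (q^{j+m-n} - 1). -/

import Mathlib

/-- `[1^m 0^j]_q = ∑_{i<m} q^{j+i}`. -/
def onesZeros (q j m : ℕ) : ℕ := ∑ i ∈ Finset.range m, q ^ (j + i)

/-- The greedy subtraction procedure: `bGreedy q j m t` is `b_{j,m,t+1}`;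
at each step subtract `q^l - 1` for the largest `l ≥ 1` with
`q^l - 1 ≤` the current value. -/
def bGreedy (q j m : ℕ) : ℕ → ℕ
  | 0 => onesZeros q j m
  | t + 1 =>
      bGreedy q j m t -
        (q ^ (Nat.findGreatest (fun l => 1 ≤ l ∧ q ^ l - 1 ≤ bGreedy q j m t)
          (bGreedy q j m t)) - 1)

lemma geo {q : ℕ} (hq : 2 ≤ q) : ∀ N, (∑ i ∈ Finset.range N, q ^ i) + 1 ≤ q ^ N := by
  intro N
  induction N with
  | zero => simp
  | succ N ih =>
    rw [Finset.sum_range_succ, pow_succ]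
    have h2 : q ^ N * 2 ≤ q ^ N * q := Nat.mul_le_mul_left _ hq
    omega

lemma fg (q j m t : ℕ) (hq : 2 ≤ q) (hj : 2 ≤ j) (ht : t + 1 ≤ q ^ (j - 1)) (htm : t < m)
    (hb : bGreedy q j m t = (∑ i ∈ Finset.range (m - t), q ^ (j + i)) + t) :
    Nat.findGreatest (fun l => 1 ≤ l ∧ q ^ l - 1 ≤ bGreedy q j m t)
      (bGreedy q j m t) = j + (m - t) - 1 := by
  obtain ⟨j', rfl⟩ : ∃ j', j = j' + 2 := ⟨j - 2, by omega⟩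
  obtain ⟨k, hk⟩ : ∃ k, m - t = k + 1 := ⟨m - t - 1, by omega⟩
  rw [hk] at hb
  have ht' : t + 1 ≤ q ^ (j' + 1) := by simpa using ht
  set B := bGreedy q (j' + 2) m t with hBdef
  set S := ∑ i ∈ Finset.range (k + 1), q ^ (j' + 2 + i) with hS
  -- the candidate L
  have hLeq : j' + 2 + (m - t) - 1 = j' + 2 + k := by omega
  rw [hLeq]
  -- q ^ (j'+2+k) ≤ S  (it's the top term)
  have hterm : q ^ (j' + 2 + k) ≤ S := by
    rw [hS, Finset.sum_range_succ]
    exact Nat.le_add_left _ _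
  have hqL : q ^ (j' + 2 + k) ≤ B := by omega
  -- L < q^L
  have hLlt : j' + 2 + k < q ^ (j' + 2 + k) := Nat.lt_pow_self (by omega)
  -- upper bound : B + 2 ≤ q ^ (j'+2+k+1)
  have hsplit : (∑ i ∈ Finset.range (j' + 2), q ^ i) + S
      = ∑ i ∈ Finset.range (j' + 2 + (k + 1)), q ^ i :=
    (Finset.sum_range_add (fun i => q ^ i) (j' + 2) (k + 1)).symm
  have hlow : q ^ (j' + 1) + 1 ≤ ∑ i ∈ Finset.range (j' + 2), q ^ i := by
    rw [Finset.sum_range_succ]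
    have h1 : 1 ≤ ∑ i ∈ Finset.range (j' + 1), q ^ i := by
      rw [Finset.sum_range_succ']
      simp
    omega
  have hgeo := geo hq (j' + 2 + (k + 1))
  have hupper : B + 2 ≤ q ^ (j' + 2 + k + 1) := by
    have : j' + 2 + (k + 1) = j' + 2 + k + 1 := by omega
    rw [this] at hgeo hsplit
    omega
  rw [Nat.findGreatest_eq_iff]
  refine ⟨by omega, fun _ => ⟨by omega, by omega⟩, fun n hn hnB => ?_⟩
  rintro ⟨-, hle⟩
  have : q ^ (j' + 2 + k + 1) ≤ q ^ n := Nat.pow_le_pow_right (by omega) (by omega)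
  have hq1 : 1 ≤ q ^ n := Nat.one_le_pow _ _ (by omega)
  omega

lemma val (q j m : ℕ) (hq : 2 ≤ q) (hj : 2 ≤ j) :
    ∀ t, t ≤ q ^ (j - 1) → t ≤ m →
      bGreedy q j m t = (∑ i ∈ Finset.range (m - t), q ^ (j + i)) + t := by
  intro t
  induction t with
  | zero => simp [bGreedy, onesZeros]
  | succ t ih =>
    intro ht htm
    have hb := ih (by omega) (by omega)
    have hfg := fg q j m t hq hj ht (by omega) hb
    show bGreedy q j m t - (q ^ _ - 1) = _
    rw [hfg, hb]
    obtain ⟨k, hk⟩ : ∃ k, m - t = k + 1 := ⟨m - t - 1, by omega⟩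
    rw [hk, Finset.sum_range_succ]
    have hk2 : m - (t + 1) = k := by omega
    rw [hk2]
    have hLeq : j + (k + 1) - 1 = j + k := by omega
    rw [hLeq]
    have hq1 : 1 ≤ q ^ (j + k) := Nat.one_le_pow _ _ (by omega)
    omega

/-- for `q ≥ 2`, `j ≥ 2`, `1 ≤ n ≤ q^{j-1}` and `m ≥ n`,
the largest valid `l` at step `n` is `j + m - n`, i.e.
`b_{j,m,n+1} = b_{j,m,n} - (q^{j+m-n} - 1)`. -/
theorem stmt4 (q j : ℕ) (hq : 2 ≤ q) (hj : 2 ≤ j) (n m : ℕ)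
    (hn1 : 1 ≤ n) (hn2 : n ≤ q ^ (j - 1)) (hm : n ≤ m) :
    Nat.findGreatest (fun l => 1 ≤ l ∧ q ^ l - 1 ≤ bGreedy q j m (n - 1))
        (bGreedy q j m (n - 1)) = j + m - n ∧
      bGreedy q j m n = bGreedy q j m (n - 1) - (q ^ (j + m - n) - 1) := by
  obtain ⟨t, rfl⟩ : ∃ t, n = t + 1 := ⟨n - 1, by omega⟩
  simp only [Nat.add_sub_cancel]
  have hb := val q j m hq hj t (by omega) (by omega)
  have hfg := fg q j m t hq hj hn2 (by omega) hb
  have hLeq : j + (m - t) - 1 = j + m - (t + 1) := by omega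
  rw [hLeq] at hfg
  refine ⟨hfg, ?_⟩
  show bGreedy q j m t - (q ^ _ - 1) = _
  rw [hfg]
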